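/- Let Γ = ℤ[ω] with ω = e^{2πi/3} and L = Γ ∪ ((2+ω)/3 + Γ) be the hexagonal packing. If R is a similarity isometry of L with scaling factor β > 0, then βRΓ ⊆ Γ; i.e., every component of βRL is contained in exactly one component of L. -/
import Mathlib


/-- For the hexagonal packing L = ℤ[ω] ∪ ((2+ω)/3 + ℤ[ω]), ω = e^{2πi/3}: if βRL ⊆ L
for a linear isometry R and β > 0, then βRΓ ⊆ Γ, i.e. every component of βRL lies in
exactly one component of L. -/
theorem stmt15
    (ω : ℂ) (hω : ω = Complex.exp (2 * Real.pi * Complex.I / 3))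
    (G : Set ℂ) (hG : G = {z : ℂ | ∃ a b : ℤ, z = (a : ℂ) + (b : ℂ) * ω})
    (L : Set ℂ) (hL : L = G ∪ ((fun γ => (2 + ω) / 3 + γ) '' G))
    (R : ℂ ≃ₗᵢ[ℝ] ℂ) (β : ℝ) (hβ : 0 < β)
    (hsub : ∀ z ∈ L, β • R z ∈ L) :
    ∀ z ∈ G, β • R z ∈ G := by
  -- Im ω = sin(2π/3) > 0
  have him : ω.im ≠ 0 := by
    have h1 : ω = Complex.exp ((2 * Real.pi / 3 : ℝ) * Complex.I) := by
      rw [hω]; push_cast; ring_nf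
    have h2 : ω.im = Real.sin (2 * Real.pi / 3) := by
      rw [h1, Complex.exp_ofReal_mul_I_im]
    have hpos : 0 < Real.sin (2 * Real.pi / 3) := by
      apply Real.sin_pos_of_pos_of_lt_pi
      · positivity
      · nlinarith [Real.pi_pos]
    rw [h2]; exact ne_of_gt hpos
  intro z hz
  -- -z ∈ G
  obtain ⟨a, b, hzab⟩ := hG ▸ hz
  have hnz : -z ∈ G := by
    rw [hG]; exact ⟨-a, -b, by push_cast [hzab]; ring⟩
  have h1 := hsub z (by rw [hL]; exact Or.inl hz)
  have h2 := hsub (-z) (by rw [hL]; exact Or.inl hnz)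
  have hneg : β • R (-z) = -(β • R z) := by
    rw [map_neg, smul_neg]
  rw [hL] at h1 h2
  rcases h2 with h2 | h2
  · -- -(β•Rz) ∈ G, hence β•Rz ∈ G
    rw [hneg, hG] at h2
    obtain ⟨c, d, hcd⟩ := h2
    rw [hG]
    exact ⟨-c, -d, by push_cast; linear_combination -hcd⟩
  · rcases h1 with h1 | h1
    · exact h1
    · -- both in shifted copy: contradiction
      exfalso
      obtain ⟨g1, hg1, hE1⟩ := h1
      obtain ⟨g2, hg2, hE2⟩ := h2
      rw [hG] at hg1 hg2
      obtain ⟨a1, b1, hab1⟩ := hg1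
      obtain ⟨a2, b2, hab2⟩ := hg2
      rw [hneg] at hE2
      -- (2+ω)/3 + g1 + ((2+ω)/3 + g2) = 0
      have hE1' : (2 + ω) / 3 + g1 = β • R z := hE1
      have hE2' : (2 + ω) / 3 + g2 = -(β • R z) := hE2
      have E : (2 + ω) / 3 + ((a1 : ℂ) + b1 * ω) + ((2 + ω) / 3 + ((a2 : ℂ) + b2 * ω)) = 0 := by
        rw [← hab1, ← hab2]
        linear_combination hE1' + hE2'
      have E3 : (2 + ω) + 3 * ((a1 : ℂ) + b1 * ω) + ((2 + ω) + 3 * ((a2 : ℂ) + b2 * ω)) = 0 := by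
        linear_combination 3 * E
      have Eim := congrArg Complex.im E3
      simp [Complex.add_im, Complex.mul_im, Complex.mul_re] at Eim
      have key : ((2 : ℝ) + 3 * b1 + 3 * b2) * ω.im = 0 := by ring_nf; ring_nf at Eim; linarith
      have : ((2 : ℝ) + 3 * b1 + 3 * b2) = 0 := by
        rcases mul_eq_zero.mp key with h | h
        · exact h
        · exact absurd h him
      have hZ : (2 + 3 * b1 + 3 * b2 : ℤ) = 0 := by exact_mod_cast this
      omega
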